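/- arXiv:2305.13907 — 2 statements merged into one kernel-verified Lean document; each statement's English description precedes it below -/
import Mathlib

section
/- On the invariant torus T = {(I,Φ) : I_1 = … = I_N = 1/2}, the Hamiltonian dynamics of H₀ restricts to the Kuramoto model: for every Φ ∈ ℝ^N and every k ∈ {1,…,N}, evaluating at I = (1/2,…,1/2) one has ∂H₀/∂I_k (I,Φ) = ω_k + (K/N) Σ_{j=1}^N A_{kj} sin(φ_j − φ_k), i.e. the angle equation φ̇_k = ∂H₀/∂I_k on T coincides with the right-hand side of the Kuramoto model (Eq. (5) of the paper). -/
open Real Finset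

/-- The embedding Hamiltonian `H₀(I,Φ) = Σᵢ ωᵢ Iᵢ − (K/N) Σᵢⱼ Aᵢⱼ √(Iᵢ Iⱼ)(Iⱼ − Iᵢ) sin(φⱼ − φᵢ)`
(Eq. (3) of the paper, sin version, for which the Hamiltonian equations (C1) hold). -/
noncomputable def H0 (N : ℕ) (A : Matrix (Fin N) (Fin N) ℝ) (K : ℝ) (ω : Fin N → ℝ)
    (I Φ : Fin N → ℝ) : ℝ :=
  ∑ i, ω i * I i -
    K / N * ∑ i, ∑ j, A i j * Real.sqrt (I i * I j) * (I j - I i) * Real.sin (Φ j - Φ i)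

/-- On the invariant torus `T = {I₁ = ⋯ = I_N = 1/2}` the Hamiltonian dynamics of `H₀`
restricts to the Kuramoto model: at `I = (1/2,…,1/2)`,
`∂H₀/∂I_k (I,Φ) = ω_k + (K/N) Σⱼ A_{kj} sin(φ_j − φ_k)`. -/
theorem torus_dynamics_is_kuramoto (N : ℕ) (hN : 1 ≤ N)
    (A : Matrix (Fin N) (Fin N) ℝ) (hsym : A.IsSymm)
    (h01 : ∀ i j, A i j = 0 ∨ A i j = 1) (hdiag : ∀ i, A i i = 0)
    (K : ℝ) (hK : 0 < K) (ω : Fin N → ℝ)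
    (Φ : Fin N → ℝ) (k : Fin N) :
    HasDerivAt (fun x => H0 N A K ω (Function.update (fun _ => (1 : ℝ) / 2) k x) Φ)
      (ω k + K / N * ∑ j, A k j * Real.sin (Φ j - Φ k))
      ((1 : ℝ) / 2) := by
  classical
  set S : ℝ := ∑ j, A k j * Real.sin (Φ j - Φ k) with hS
  have key : ∀ x : ℝ, H0 N A K ω (Function.update (fun _ => (1:ℝ)/2) k x) Φ
      = ((∑ i, ω i * (1/2)) - ω k * (1/2)) + ω k * x
        - K / N * (2 * (Real.sqrt (x * (1/2)) * ((1/2 - x) * S))) := by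
    intro x
    unfold H0
    set I : Fin N → ℝ := Function.update (fun _ => (1:ℝ)/2) k x with hI
    have hIk : I k = x := Function.update_self _ _ _
    have hIne : ∀ i, i ≠ k → I i = 1/2 := fun i hi => Function.update_of_ne hi _ _
    have hlin : ∑ i, ω i * I i = ((∑ i, ω i * (1/2)) - ω k * (1/2)) + ω k * x := by
      have h1 : ∀ i ∈ Finset.univ, ω i * I i
          = ω i * (1/2) + (if i = k then ω k * x - ω k * (1/2) else 0) := by
        intro i _
        by_cases h : i = k
        · subst h; rw [hIk]; simp
        · simp [h, hIne i h]
      rw [Finset.sum_congr rfl h1, Finset.sum_add_distrib,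
        Finset.sum_ite_eq' Finset.univ k]
      simp; ring
    set F : Fin N → Fin N → ℝ :=
      fun i j => A i j * Real.sqrt (I i * I j) * (I j - I i) * Real.sin (Φ j - Φ i) with hF
    have hsymF : ∀ i, F i k = F k i := by
      intro i
      simp only [hF]
      have hsin : Real.sin (Φ k - Φ i) = -Real.sin (Φ i - Φ k) := by
        rw [← Real.sin_neg]; ring_nf
      rw [hsin, mul_comm (I i) (I k), hsym.apply k i]
      ring
    have hdecomp : ∀ i j, F i j = (if i = k then F k j else 0) + (if j = k then F i k else 0) := by
      intro i j
      by_cases hi : i = k <;> by_cases hj : j = k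
      · subst hi; subst hj; simp [hF, hdiag]
      · subst hi; simp [hj]
      · subst hj; simp [hi]
      · simp [hi, hj, hF, hIne i hi, hIne j hj]
    have hFk : ∀ j, F k j = Real.sqrt (x * (1/2)) * ((1/2 - x) * (A k j * Real.sin (Φ j - Φ k))) := by
      intro j
      by_cases hj : j = k
      · subst hj; simp [hF, hdiag]
      · simp only [hF, hIk, hIne j hj]; ring
    have hds : ∑ i, ∑ j, F i j = 2 * (Real.sqrt (x * (1/2)) * ((1/2 - x) * S)) := by
      have h2 : ∑ i, ∑ j, F i j = (∑ j, F k j) + (∑ i, F i k) := by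
        rw [Finset.sum_congr rfl fun i _ => Finset.sum_congr rfl fun j _ => hdecomp i j]
        simp [Finset.sum_add_distrib, Finset.sum_ite_eq', Finset.sum_ite_eq]
      have h5 : ∑ j, F k j = Real.sqrt (x * (1/2)) * ((1/2 - x) * S) := by
        rw [Finset.sum_congr rfl fun j _ => hFk j, ← Finset.mul_sum, ← Finset.mul_sum]
      rw [h2, Finset.sum_congr rfl fun i _ => hsymF i, h5]
      ring
    rw [hlin, hds]
  have hsq : Real.sqrt ((1:ℝ)/2 * (1/2)) = 1/2 := by
    rw [show (1:ℝ)/2 * (1/2) = (1/2)^2 by ring, Real.sqrt_sq (by norm_num : (0:ℝ) ≤ 1/2)]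
  have h0 : HasDerivAt (fun x : ℝ => x * (1/2)) (1/2) (1/2) := by
    simpa using (hasDerivAt_id ((1:ℝ)/2)).mul_const ((1:ℝ)/2)
  have h1 : HasDerivAt (fun x : ℝ => Real.sqrt (x * (1/2))) (1/2) (1/2) := by
    have := h0.sqrt (by norm_num : ((1:ℝ)/2 * (1/2)) ≠ 0)
    convert this using 1
    rw [hsq]; norm_num
  have h3 : HasDerivAt (fun x : ℝ => (1:ℝ)/2 - x) (-1) (1/2) := by
    simpa using (hasDerivAt_id ((1:ℝ)/2)).const_sub ((1:ℝ)/2)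
  have hg : HasDerivAt (fun x : ℝ => 2 * (Real.sqrt (x * (1/2)) * ((1/2 - x) * S))) (-S) (1/2) := by
    have h4 := ((h1.mul h3).mul_const S).const_mul (2:ℝ)
    have heq : (fun x : ℝ => 2 * (Real.sqrt (x * (1/2)) * ((1/2 - x)) * S))
        = (fun x : ℝ => 2 * (Real.sqrt (x * (1/2)) * ((1/2 - x) * S))) := by
      funext x; ring
    simp only [Pi.mul_apply] at h4
    rw [heq] at h4
    refine h4.congr_deriv ?_
    rw [hsq]; ring
  have hlin' : HasDerivAt (fun x : ℝ => ((∑ i, ω i * (1/2)) - ω k * (1/2)) + ω k * x) (ω k) (1/2) := by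
    simpa using (((hasDerivAt_id ((1:ℝ)/2)).const_mul (ω k)).const_add
      ((∑ i, ω i * (1/2)) - ω k * (1/2)))
  have hmain := hlin'.sub (hg.const_mul (K / N))
  have hfun : (fun x => H0 N A K ω (Function.update (fun _ => (1:ℝ)/2) k x) Φ)
      = fun x : ℝ => ((∑ i, ω i * (1/2)) - ω k * (1/2)) + ω k * x
        - K / N * (2 * (Real.sqrt (x * (1/2)) * ((1/2 - x) * S))) := funext key
  rw [hfun]
  refine hmain.congr_deriv ?_
  ring
end

section
/- The Kuramoto model embeds in the Hamiltonian system of H₀: if Φ : ℝ → ℝ^N is differentiable and solves the Kuramoto model dφ_k/dt = ω_k + (K/N) Σ_{j=1}^N A_{kj} sin(φ_j − φ_k) for all t ∈ ℝ and k ∈ {1,…,N}, then the curve t ↦ (I(t), Φ(t)) with constant action I(t) ≡ (1/2,…,1/2) solves Hamilton's equations dI_k/dt = −∂H₀/∂φ_k and dφ_k/dt = ∂H₀/∂I_k for all t ∈ ℝ and k ∈ {1,…,N}. -/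
open Real Finset

lemma sqrt_quarter : Real.sqrt ((1:ℝ)/2 * (1/2)) = 1/2 := by
  rw [show ((1:ℝ)/2) * (1/2) = (1/2)^2 by ring, Real.sqrt_sq (by norm_num : (0:ℝ) ≤ 1/2)]

lemma sqrt_left_deriv : HasDerivAt (fun x : ℝ => Real.sqrt (x * (1/2))) (1/2) (1/2) := by
  have h := ((hasDerivAt_id ((1:ℝ)/2)).mul_const (1/2)).sqrt (by norm_num)
  convert h using 1
  simp only [id_eq, sqrt_quarter]; norm_num

lemma sqrt_right_deriv : HasDerivAt (fun x : ℝ => Real.sqrt ((1/2) * x)) (1/2) (1/2) := by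
  have h := ((hasDerivAt_id ((1:ℝ)/2)).const_mul ((1:ℝ)/2)).sqrt (by norm_num)
  convert h using 1
  simp only [id_eq, sqrt_quarter]; norm_num

/-- The Kuramoto model embeds in the Hamiltonian system of `H₀`: if `Φ : ℝ → ℝ^N` solves the
Kuramoto model, then the curve `t ↦ (I(t), Φ(t))` with constant action `I(t) ≡ (1/2,…,1/2)`
solves Hamilton's equations `dI_k/dt = −∂H₀/∂φ_k` and `dφ_k/dt = ∂H₀/∂I_k`. -/
theorem kuramoto_embeds_in_hamiltonian (N : ℕ) (hN : 1 ≤ N)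
    (A : Matrix (Fin N) (Fin N) ℝ) (hsym : A.IsSymm)
    (h01 : ∀ i j, A i j = 0 ∨ A i j = 1) (hdiag : ∀ i, A i i = 0)
    (K : ℝ) (hK : 0 < K) (ω : Fin N → ℝ)
    (Φ : ℝ → Fin N → ℝ)
    (hΦ : ∀ t k, HasDerivAt (fun s => Φ s k)
      (ω k + K / N * ∑ j, A k j * Real.sin (Φ t j - Φ t k)) t) :
    ∀ (t : ℝ) (k : Fin N),
      (∃ Dφ : ℝ,
        HasDerivAt (fun x => H0 N A K ω (fun _ => (1 : ℝ) / 2) (Function.update (Φ t) k x))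
          Dφ (Φ t k) ∧
        HasDerivAt (fun _ : ℝ => (1 : ℝ) / 2) (-Dφ) t) ∧
      (∃ DI : ℝ,
        HasDerivAt (fun x => H0 N A K ω (Function.update (fun _ => (1 : ℝ) / 2) k x) (Φ t))
          DI ((1 : ℝ) / 2) ∧
        HasDerivAt (fun s => Φ s k) DI t) := by
  intro t k
  set c := Φ t with hc
  constructor
  · -- action equation: H₀ is constant in Φ when I ≡ 1/2
    refine ⟨0, ?_, by simpa using hasDerivAt_const t ((1:ℝ)/2)⟩
    have hconst : (fun x => H0 N A K ω (fun _ => (1 : ℝ) / 2) (Function.update c k x))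
        = fun _ => ∑ i, ω i * ((1:ℝ)/2) := by
      funext x
      simp [H0]
    rw [hconst]
    exact hasDerivAt_const _ _
  · -- angle equation
    set u : ℝ → Fin N → ℝ := fun x => Function.update (fun _ => (1 : ℝ) / 2) k x with hu
    set d : Fin N → Fin N → ℝ := fun i j =>
      ((if i = k then -(1:ℝ)/2 else 0) + (if j = k then (1:ℝ)/2 else 0)) *
        (A i j * Real.sin (c j - c i)) with hd
    have key : ∀ i j, HasDerivAt
        (fun x => A i j * Real.sqrt (u x i * u x j) * (u x j - u x i) * Real.sin (c j - c i))
        (d i j) ((1:ℝ)/2) := by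
      intro i j
      rcases eq_or_ne i k with hik | hik
      · rcases eq_or_ne j k with hjk | hjk
        · have hA : A i j = 0 := by rw [hik, hjk]; exact hdiag k
          have heq : (fun x => A i j * Real.sqrt (u x i * u x j) * (u x j - u x i) *
              Real.sin (c j - c i)) = fun _ => 0 := by
            funext x; simp [hA]
          rw [heq]
          have : d i j = 0 := by simp [hd, hA]
          rw [this]
          exact hasDerivAt_const _ _
        · have heq : (fun x => A i j * Real.sqrt (u x i * u x j) * (u x j - u x i) *
              Real.sin (c j - c i)) = fun x =>
              A i j * Real.sqrt (x * (1/2)) * ((1/2) - x) * Real.sin (c j - c i) := by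
            funext x
            simp [hu, hik, Function.update_of_ne hjk]
          rw [heq]
          have h3 : HasDerivAt (fun x : ℝ => (1/2 : ℝ) - x) (-1) ((1:ℝ)/2) := by
            simpa using (hasDerivAt_const ((1:ℝ)/2) ((1:ℝ)/2)).fun_sub (hasDerivAt_id ((1:ℝ)/2))
          have h4 := ((sqrt_left_deriv.const_mul (A i j)).fun_mul h3).mul_const
            (Real.sin (c j - c i))
          refine h4.congr_deriv ?_
          rw [hd]
          simp only [hik, if_pos rfl, if_neg hjk, sqrt_quarter, if_true]
          ring
      · rcases eq_or_ne j k with hjk | hjk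
        · have heq : (fun x => A i j * Real.sqrt (u x i * u x j) * (u x j - u x i) *
              Real.sin (c j - c i)) = fun x =>
              A i j * Real.sqrt ((1/2) * x) * (x - (1/2)) * Real.sin (c j - c i) := by
            funext x
            simp [hu, hjk, Function.update_of_ne hik]
          rw [heq]
          have h3 : HasDerivAt (fun x : ℝ => x - (1/2 : ℝ)) 1 ((1:ℝ)/2) := by
            simpa using (hasDerivAt_id ((1:ℝ)/2)).fun_sub (hasDerivAt_const ((1:ℝ)/2) ((1:ℝ)/2))
          have h4 := ((sqrt_right_deriv.const_mul (A i j)).fun_mul h3).mul_const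
            (Real.sin (c j - c i))
          refine h4.congr_deriv ?_
          rw [hd]
          simp only [hjk, if_pos rfl, if_neg hik, sqrt_quarter, if_true]
          ring
        · have heq : (fun x => A i j * Real.sqrt (u x i * u x j) * (u x j - u x i) *
              Real.sin (c j - c i)) = fun _ => 0 := by
            funext x
            simp [hu, Function.update_of_ne hik, Function.update_of_ne hjk]
          rw [heq]
          have : d i j = 0 := by simp [hd, hik, hjk]
          rw [this]
          exact hasDerivAt_const _ _
    have pull : ∀ (g : Fin N → ℝ), (∑ i, if i = k then g i else 0) = g k := by
      intro g
      rw [Finset.sum_ite_eq' Finset.univ k g]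
      simp
    have hω : HasDerivAt (fun x => ∑ i, ω i * u x i)
        (∑ i, if i = k then ω i else 0) ((1:ℝ)/2) := by
      refine HasDerivAt.fun_sum fun i _ => ?_
      rcases eq_or_ne i k with hik | hik
      · subst hik
        simpa [hu] using (hasDerivAt_id ((1:ℝ)/2)).const_mul (ω i)
      · simpa [hu, Function.update_of_ne hik, hik] using
          hasDerivAt_const ((1:ℝ)/2) (ω i * (1/2))
    have hsum : HasDerivAt
        (fun x => ∑ i, ∑ j, A i j * Real.sqrt (u x i * u x j) * (u x j - u x i) *
          Real.sin (c j - c i))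
        (∑ i, ∑ j, d i j) ((1:ℝ)/2) :=
      HasDerivAt.fun_sum fun i _ => HasDerivAt.fun_sum fun j _ => key i j
    have hH : HasDerivAt (fun x => H0 N A K ω (u x) c)
        ((∑ i, if i = k then ω i else 0) - K / N * ∑ i, ∑ j, d i j) ((1:ℝ)/2) := by
      have := hω.fun_sub (hsum.const_mul (K / N))
      simpa [H0] using this
    have hsplit : ∀ i j, d i j =
        (if i = k then -(1:ℝ)/2 * (A i j * Real.sin (c j - c i)) else 0) +
        (if j = k then (1:ℝ)/2 * (A i j * Real.sin (c j - c i)) else 0) := by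
      intro i j
      rw [hd]
      by_cases hik : i = k <;> by_cases hjk : j = k <;> simp [hik, hjk] <;> ring
    have e1 : (∑ i, ∑ j, if i = k then -(1:ℝ)/2 * (A i j * Real.sin (c j - c i)) else 0)
        = ∑ j, -(1:ℝ)/2 * (A k j * Real.sin (c j - c k)) := by
      rw [← pull (fun i => ∑ j, -(1:ℝ)/2 * (A i j * Real.sin (c j - c i)))]
      refine Finset.sum_congr rfl fun i _ => ?_
      by_cases hik : i = k
      · subst hik; simp
      · simp [hik]
    have e2 : (∑ i, ∑ j, if j = k then (1:ℝ)/2 * (A i j * Real.sin (c j - c i)) else 0)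
        = ∑ i, (1:ℝ)/2 * (A i k * Real.sin (c k - c i)) := by
      rw [Finset.sum_comm]
      rw [← pull (fun j => ∑ i, (1:ℝ)/2 * (A i j * Real.sin (c j - c i)))]
      refine Finset.sum_congr rfl fun j _ => ?_
      by_cases hjk : j = k
      · subst hjk; simp
      · simp [hjk]
    have hdsum : ∑ i, ∑ j, d i j = -∑ j, A k j * Real.sin (c j - c k) := by
      calc ∑ i, ∑ j, d i j
          = (∑ i, ∑ j, if i = k then -(1:ℝ)/2 * (A i j * Real.sin (c j - c i)) else 0)
            + (∑ i, ∑ j, if j = k then (1:ℝ)/2 * (A i j * Real.sin (c j - c i)) else 0) := by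
            simp only [hsplit, Finset.sum_add_distrib]
        _ = (∑ j, -(1:ℝ)/2 * (A k j * Real.sin (c j - c k)))
            + (∑ j, (1:ℝ)/2 * (A j k * Real.sin (c k - c j))) := by rw [e1, e2]
        _ = ∑ j, -(A k j * Real.sin (c j - c k)) := by
            rw [← Finset.sum_add_distrib]
            refine Finset.sum_congr rfl fun j _ => ?_
            have h1 : A j k = A k j := hsym.apply k j
            have h2 : Real.sin (c k - c j) = -Real.sin (c j - c k) := by
              rw [← Real.sin_neg, neg_sub]
            rw [h1, h2]
            ring
        _ = -∑ j, A k j * Real.sin (c j - c k) := by rw [Finset.sum_neg_distrib]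
    refine ⟨ω k + K / N * ∑ j, A k j * Real.sin (c j - c k), ?_, hΦ t k⟩
    have hval : (∑ i, if i = k then ω i else 0) - K / N * ∑ i, ∑ j, d i j
        = ω k + K / N * ∑ j, A k j * Real.sin (c j - c k) := by
      rw [pull ω, hdsum]
      ring
    rw [← hval]
    exact hH
end
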